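/- Let D be a GCD domain with fraction field K and let A ∈ D^{n×n} admit a permutation-free LD⁻¹U decomposition A = L · D_g^{−1} · U. Then for every k with 1 ≤ k ≤ n, the k-th determinantal divisor d_k* of A divides every entry of the k-th row of U, and d_k* divides every entry of the k-th column of L. -/
import Mathlib


/-- The diagonal matrix `D_g = diag(p₁, p₁p₂, p₂p₃, …, p_{n−1}p_n)` built from the
pivots `p : Fin n → D`. -/
def bareissDiag {D : Type*} [CommRing D] {n : ℕ} (p : Fin n → D) :
    Matrix (Fin n) (Fin n) D :=
  Matrix.diagonal fun i =>
    (if (i : ℕ) = 0 then 1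
      else p ⟨(i : ℕ) - 1, lt_of_le_of_lt (Nat.sub_le _ _) i.isLt⟩) * p i

/-- Auxiliary: the "row" half of the theorem. -/
theorem stmt4_aux {D K : Type*} [CommRing D] [IsDomain D] [Field K]
    [Algebra D K] [IsFractionRing D K] {n : ℕ} (A L U : Matrix (Fin n) (Fin n) D)
    (hL : ∀ i j : Fin n, (i : ℕ) < (j : ℕ) → L i j = 0)
    (hU : ∀ i j : Fin n, (j : ℕ) < (i : ℕ) → U i j = 0)
    (hdiag : ∀ i : Fin n, U i i = L i i)
    (hp : ∀ i : Fin n, L i i ≠ 0)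
    (hA : A.map (algebraMap D K) =
      L.map (algebraMap D K) *
        ((bareissDiag fun i : Fin n => L i i).map (algebraMap D K))⁻¹ *
        U.map (algebraMap D K))
    (k : Fin n) (d : D)
    (hd1 : ∀ I J : Fin ((k : ℕ) + 1) → Fin n, StrictMono I → StrictMono J →
      d ∣ (A.submatrix I J).det) :
    ∀ j : Fin n, d ∣ U k j := by
  intro j
  by_cases hjk : (j : ℕ) < (k : ℕ)
  · rw [hU k j hjk]; exact dvd_zero d
  have hkj : (k : ℕ) ≤ (j : ℕ) := le_of_not_gt hjk
  set f := algebraMap D K with hf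
  have hinj : Function.Injective f := IsFractionRing.injective D K
  set qv : Fin n → D := fun i =>
    (if (i : ℕ) = 0 then 1
      else L ⟨(i : ℕ) - 1, lt_of_le_of_lt (Nat.sub_le _ _) i.isLt⟩
        ⟨(i : ℕ) - 1, lt_of_le_of_lt (Nat.sub_le _ _) i.isLt⟩) * L i i with hqv
  have hqvne : ∀ i, qv i ≠ 0 := by
    intro i
    apply mul_ne_zero
    · split
      · exact one_ne_zero
      · exact hp _
    · exact hp i
  have hqvK : ∀ i : Fin n, f (qv i) ≠ 0 := fun i => by
    simpa [map_eq_zero_iff f hinj] using hqvne i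
  have hDinv : ((bareissDiag fun i : Fin n => L i i).map f)⁻¹ =
      Matrix.diagonal (fun i => (f (qv i))⁻¹) := by
    apply Matrix.inv_eq_right_inv
    rw [bareissDiag, Matrix.diagonal_map (map_zero f), Matrix.diagonal_mul_diagonal,
      ← Matrix.diagonal_one, Matrix.diagonal_eq_diagonal_iff]
    exact fun i => mul_inv_cancel₀ (hqvK i)
  have key : ∀ a b : Fin n, f (A a b) = ∑ s, f (L a s) * (f (qv s))⁻¹ * f (U s b) := by
    intro a b
    have h2 := congrFun (congrFun hA a) b
    rw [hDinv, Matrix.mul_apply (M := L.map f * Matrix.diagonal fun i => (f (qv i))⁻¹)] at h2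
    simp only [Matrix.mul_diagonal, Matrix.map_apply] at h2
    exact h2
  -- the strictly monotone index maps
  set I : Fin ((k : ℕ) + 1) → Fin n := Fin.castLE k.isLt with hI
  have monoI : StrictMono I := Fin.strictMono_castLE _
  set Jc : Fin ((k : ℕ) + 1) → Fin n := fun m => if (m : ℕ) < (k : ℕ) then I m else j with hJc
  have monoJ : StrictMono Jc := by
    intro a b hab
    have hab' : (a : ℕ) < (b : ℕ) := hab
    have hb' : (b : ℕ) ≤ (k : ℕ) := Nat.lt_succ_iff.mp b.isLt
    by_cases hb : (b : ℕ) < (k : ℕ)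
    · have ha : (a : ℕ) < (k : ℕ) := hab'.trans hb
      simp only [hJc, if_pos ha, if_pos hb]
      exact monoI hab
    · have ha : (a : ℕ) < (k : ℕ) := by omega
      simp only [hJc, if_pos ha, if_neg hb]
      show ((I a : Fin n) : ℕ) < (j : ℕ)
      have : ((I a : Fin n) : ℕ) = (a : ℕ) := rfl
      omega
  have hIval : ∀ m : Fin ((k : ℕ) + 1), ((I m : Fin n) : ℕ) = (m : ℕ) := fun m => rfl
  -- truncation of the middle sum
  have htrunc : ∀ a : Fin n, (a : ℕ) ≤ (k : ℕ) → ∀ b : Fin n,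
      f (A a b) = ∑ m' : Fin ((k : ℕ) + 1),
        f (L a (I m')) * (f (qv (I m')))⁻¹ * f (U (I m') b) := by
    intro a ha b
    rw [key a b]
    have hinj' : ∀ x ∈ (Finset.univ : Finset (Fin ((k : ℕ) + 1))), ∀ y ∈ Finset.univ,
        I x = I y → x = y := fun x _ y _ h => monoI.injective h
    rw [← Finset.sum_image (f := fun s => f (L a s) * (f (qv s))⁻¹ * f (U s b)) hinj']
    refine (Finset.sum_subset (Finset.subset_univ _) ?_).symm
    intro s _ hs
    have hks : (k : ℕ) < (s : ℕ) := by
      by_contra hc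
      exact hs (Finset.mem_image.mpr ⟨⟨(s : ℕ), by omega⟩, Finset.mem_univ _, Fin.ext rfl⟩)
    rw [hL a s (by omega)]
    simp
  -- square matrices over K
  set M1 : Matrix (Fin ((k : ℕ) + 1)) (Fin ((k : ℕ) + 1)) K :=
    Matrix.of fun m m' => f (L (I m) (I m')) with hM1
  set M2 : Matrix (Fin ((k : ℕ) + 1)) (Fin ((k : ℕ) + 1)) K :=
    Matrix.diagonal fun m => (f (qv (I m)))⁻¹ with hM2
  set M3 : Matrix (Fin ((k : ℕ) + 1)) (Fin ((k : ℕ) + 1)) K :=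
    Matrix.of fun m' c => f (U (I m') (Jc c)) with hM3
  have hprod : (A.submatrix I Jc).map f = M1 * M2 * M3 := by
    ext m c
    have := htrunc (I m) (by rw [hIval]; exact Nat.lt_succ_iff.mp m.isLt) (Jc c)
    simp only [Matrix.map_apply, Matrix.submatrix_apply, this, hM1, hM2, hM3,
      Matrix.mul_apply, Matrix.mul_diagonal, Matrix.of_apply, Matrix.diagonal_apply,
      mul_ite, ite_mul, mul_zero, zero_mul, Finset.sum_ite_eq, Finset.sum_ite_eq',
      Finset.mem_univ, if_true, mul_assoc]
  have hdet : f ((A.submatrix I Jc).det) = M1.det * M2.det * M3.det := by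
    rw [RingHom.map_det, RingHom.mapMatrix_apply, hprod, Matrix.det_mul, Matrix.det_mul]
  have detM1 : M1.det = ∏ m, f (L (I m) (I m)) := by
    apply Matrix.det_of_lowerTriangular
    intro a b hab
    have : (a : ℕ) < (b : ℕ) := hab
    show f (L (I a) (I b)) = 0
    rw [hL (I a) (I b) (by rw [hIval, hIval]; exact this)]
    simp
  have detM2 : M2.det = ∏ m, (f (qv (I m)))⁻¹ := Matrix.det_diagonal
  have detM3 : M3.det = ∏ m, f (U (I m) (Jc m)) := by
    apply Matrix.det_of_upperTriangular
    intro a b hab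
    have hba : (b : ℕ) < (a : ℕ) := hab
    show f (U (I a) (Jc b)) = 0
    have hbk : (b : ℕ) < (k : ℕ) := by
      have := Nat.lt_succ_iff.mp a.isLt; omega
    have hJcb : Jc b = I b := by simp only [hJc, if_pos hbk]
    rw [hJcb, hU (I a) (I b) (by rw [hIval, hIval]; exact hba)]
    simp
  -- products over D
  set Pk : D := ∏ m : Fin ((k : ℕ) + 1), L (I m) (I m) with hPk
  set Pk' : D := ∏ m : Fin (k : ℕ), L (I m.castSucc) (I m.castSucc) with hPk'
  set V : D := ∏ m : Fin ((k : ℕ) + 1), qv (I m) with hV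
  have hPkne : Pk ≠ 0 := Finset.prod_ne_zero_iff.mpr fun m _ => hp _
  have hPk'ne : Pk' ≠ 0 := Finset.prod_ne_zero_iff.mpr fun m _ => hp _
  have hVprod : V = Pk' * Pk := by
    rw [hV, hqv, Finset.prod_mul_distrib]
    congr 1
    rw [Fin.prod_univ_succ]
    have h0 : ((I 0 : Fin n) : ℕ) = 0 := rfl
    rw [if_pos h0, one_mul]
    apply Finset.prod_congr rfl
    intro m _
    have hs : ((I m.succ : Fin n) : ℕ) = (m : ℕ) + 1 := rfl
    rw [if_neg (by omega)]
    congr 1 <;> exact Fin.ext (by simp [hs])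
  have hM3D : (∏ m : Fin ((k : ℕ) + 1), U (I m) (Jc m)) = Pk' * U k j := by
    rw [Fin.prod_univ_castSucc]
    have hlastI : I (Fin.last (k : ℕ)) = k := Fin.ext rfl
    have hlastJ : Jc (Fin.last (k : ℕ)) = j := by
      simp only [hJc]
      rw [if_neg (by simp)]
    rw [hlastI, hlastJ]
    congr 1
    apply Finset.prod_congr rfl
    intro m _
    have hmk : ((m.castSucc : Fin ((k : ℕ) + 1)) : ℕ) < (k : ℕ) := by
      simpa using m.isLt
    have : Jc m.castSucc = I m.castSucc := by simp only [hJc, if_pos hmk]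
    rw [this, hdiag]
  have hprodne : (∏ m : Fin ((k : ℕ) + 1), f (qv (I m))) ≠ 0 :=
    Finset.prod_ne_zero_iff.mpr fun m _ => by
      simpa [map_eq_zero_iff f hinj] using hqvne (I m)
  have hKey : f ((A.submatrix I Jc).det) * f V =
      f Pk * f (∏ m : Fin ((k : ℕ) + 1), U (I m) (Jc m)) := by
    rw [hdet, detM1, detM2, detM3, hV, hPk, map_prod, map_prod, map_prod]
    rw [Finset.prod_inv_distrib]
    field_simp
  have hD : (A.submatrix I Jc).det * V = Pk * (Pk' * U k j) := by
    apply hinj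
    rw [map_mul, map_mul, hKey, hM3D]
  have final : (A.submatrix I Jc).det = U k j := by
    rw [hVprod] at hD
    apply mul_right_cancel₀ (mul_ne_zero hPk'ne hPkne)
    linear_combination hD
  rw [← final]
  exact hd1 I Jc monoI monoJ

theorem stmt4 {D K : Type*} [CommRing D] [IsDomain D] [GCDMonoid D] [Field K]
    [Algebra D K] [IsFractionRing D K] {n : ℕ} (A L U : Matrix (Fin n) (Fin n) D)
    (hL : ∀ i j : Fin n, (i : ℕ) < (j : ℕ) → L i j = 0)
    (hU : ∀ i j : Fin n, (j : ℕ) < (i : ℕ) → U i j = 0)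
    (hdiag : ∀ i : Fin n, U i i = L i i)
    (hp : ∀ i : Fin n, L i i ≠ 0)
    (hA : A.map (algebraMap D K) =
      L.map (algebraMap D K) *
        ((bareissDiag fun i : Fin n => L i i).map (algebraMap D K))⁻¹ *
        U.map (algebraMap D K))
    (k : Fin n) (d : D)
    (hd1 : ∀ I J : Fin ((k : ℕ) + 1) → Fin n, StrictMono I → StrictMono J →
      d ∣ (A.submatrix I J).det)
    (hd2 : ∀ c : D, (∀ I J : Fin ((k : ℕ) + 1) → Fin n, StrictMono I → StrictMono J →
      c ∣ (A.submatrix I J).det) → c ∣ d) :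
    (∀ j : Fin n, d ∣ U k j) ∧ (∀ i : Fin n, d ∣ L i k) := by
  constructor
  · exact stmt4_aux A L U hL hU hdiag hp hA k d hd1
  · -- apply the aux lemma to the transposed decomposition
    have hdiagT : ∀ i : Fin n, L.transpose i i = U.transpose i i := fun i => (hdiag i).symm
    have hpT : ∀ i : Fin n, U.transpose i i ≠ 0 := fun i => by
      simpa [Matrix.transpose_apply, hdiag i] using hp i
    have hBD : (bareissDiag fun i : Fin n => U.transpose i i) =
        bareissDiag fun i : Fin n => L i i := by
      rw [show (fun i : Fin n => U.transpose i i) = fun i : Fin n => L i i from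
        funext fun i => hdiag i]
    have hAT : A.transpose.map (algebraMap D K) =
        U.transpose.map (algebraMap D K) *
          ((bareissDiag fun i : Fin n => U.transpose i i).map (algebraMap D K))⁻¹ *
          L.transpose.map (algebraMap D K) := by
      rw [hBD]
      have hBDT : (bareissDiag fun i : Fin n => L i i).transpose =
          bareissDiag fun i : Fin n => L i i := by
        rw [bareissDiag, Matrix.diagonal_transpose]
      have hmid : (((bareissDiag fun i : Fin n => L i i).map (algebraMap D K)).transpose)⁻¹ =
          ((bareissDiag fun i : Fin n => L i i).map (algebraMap D K))⁻¹ := by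
        rw [← Matrix.transpose_map, hBDT]
      have h := congrArg Matrix.transpose hA
      rw [Matrix.transpose_mul, Matrix.transpose_mul, Matrix.transpose_nonsing_inv,
        hmid] at h
      simp only [Matrix.transpose_map]
      rw [h]
      noncomm_ring
    have hd1T : ∀ I J : Fin ((k : ℕ) + 1) → Fin n, StrictMono I → StrictMono J →
        d ∣ (A.transpose.submatrix I J).det := by
      intro I J hI hJ
      rw [← Matrix.transpose_submatrix, Matrix.det_transpose]
      exact hd1 J I hJ hI
    have h := stmt4_aux A.transpose U.transpose L.transpose
      (fun i j hij => hU j i hij) (fun i j hij => hL j i hij) hdiagT hpT hAT k d hd1T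
    intro i
    simpa using h i
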